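/- Fix γ ∈ ℝ and define H(b,λ) = (1/λ)·(b − 1 + (1+b)·cosh(γ) + 2√b·sinh(γ))/(b−1) for λ > 0, b > 0, b ≠ 1. Then H satisfies the TT̄ flow equation ∂H/∂λ = −(1/2)·H² + (1/2)·b·(∂H/∂b)²·(1−b)² at every such point. -/

import Mathlib

/-- The γBI (ModMax-Born-Infeld) μ-frame interaction function satisfies the TT̄ flow
equation in λ. -/
theorem gammaBI_TTbar_flow (γ : ℝ) (H : ℝ → ℝ → ℝ)
    (hH : ∀ b l : ℝ, H b l =
      (1 / l) * ((b - 1 + (1 + b) * Real.cosh γ + 2 * Real.sqrt b * Real.sinh γ) / (b - 1))) :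
    ∀ b l : ℝ, 0 < l → 0 < b → b ≠ 1 →
      deriv (fun l' => H b l') l =
        -(1 / 2) * (H b l) ^ 2
          + (1 / 2) * b * (deriv (fun b' => H b' l) b) ^ 2 * (1 - b) ^ 2 := by
  intro b l hl hb hb1
  have hl0 : l ≠ 0 := hl.ne'
  have hb0 : b ≠ 0 := hb.ne'
  have hs : Real.sqrt b ^ 2 = b := Real.sq_sqrt hb.le
  have hs0 : Real.sqrt b ≠ 0 := (Real.sqrt_pos.mpr hb).ne'
  have hbm1 : b - 1 ≠ 0 := sub_ne_zero.mpr hb1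
  set c := Real.cosh γ with hc
  set sg := Real.sinh γ with hsg
  set C : ℝ := (b - 1 + (1 + b) * c + 2 * Real.sqrt b * sg) / (b - 1) with hC
  -- derivative in l
  have hdl : deriv (fun l' => H b l') l = -(l ^ 2)⁻¹ * C := by
    have h1 : (fun l' => H b l') = fun l' => l'⁻¹ * C := by
      funext l'; rw [hH]; ring
    rw [h1]
    exact ((hasDerivAt_inv hl0).mul_const C).deriv
  -- derivative in b
  have hnum : HasDerivAt (fun b' => b' - 1 + (1 + b') * c + 2 * Real.sqrt b' * sg)
      (1 + c + 2 * (1 / (2 * Real.sqrt b)) * sg) b := by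
    have h1 : HasDerivAt (fun b' : ℝ => b' - 1) 1 b := (hasDerivAt_id b).sub_const 1
    have h2 : HasDerivAt (fun b' : ℝ => (1 + b') * c) c b := by
      simpa using (((hasDerivAt_id b).const_add 1).mul_const c)
    have h3 : HasDerivAt (fun b' : ℝ => 2 * Real.sqrt b' * sg)
        (2 * (1 / (2 * Real.sqrt b)) * sg) b := by
      simpa [mul_comm, mul_assoc, mul_left_comm] using
        (((Real.hasDerivAt_sqrt hb0).const_mul 2).mul_const sg)
    exact (h1.add h2).add h3
  have hden : HasDerivAt (fun b' : ℝ => b' - 1) 1 b := (hasDerivAt_id b).sub_const 1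
  have hdb : deriv (fun b' => H b' l) b =
      (1 / l) * (((1 + c + 2 * (1 / (2 * Real.sqrt b)) * sg) * (b - 1)
        - (b - 1 + (1 + b) * c + 2 * Real.sqrt b * sg) * 1) / (b - 1) ^ 2) := by
    have h1 : (fun b' => H b' l) = fun b' =>
        (1 / l) * ((b' - 1 + (1 + b') * c + 2 * Real.sqrt b' * sg) / (b' - 1)) := by
      funext b'; rw [hH]
    rw [h1]
    exact (((hnum.div hden hbm1)).const_mul (1 / l)).deriv
  rw [hdl, hdb, hH, hC]
  have hcosh : c ^ 2 - sg ^ 2 = 1 := by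
    rw [hc, hsg]; exact Real.cosh_sq_sub_sinh_sq γ
  field_simp
  obtain ⟨r, hr⟩ : ∃ r, Real.sqrt b = r := ⟨_, rfl⟩
  rw [hr] at hs ⊢
  rw [← hs]
  linear_combination (r ^ 2 * (r ^ 2 - 1) ^ 4) * hcosh
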